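/- Let n ≥ 6 and let i be an integer with ⌊n/3⌋ + 2 ≤ i ≤ ⌊n/2⌋. Then the number of accurate dominating sets of the cycle C_n of cardinality i satisfies d_a(C_n, i) ≤ Σ_{k=3}^{i−1} n · d(P_{n−k−2}, i−k). -/

import Mathlib

/-- `D` is a dominating set of the simple graph `G`: every vertex not in `D`
is adjacent to at least one vertex in `D`. -/
def IsDomSet {V : Type*} (G : SimpleGraph V) (D : Finset V) : Prop :=
  ∀ v : V, v ∉ D → ∃ u ∈ D, G.Adj u v

/-- `D` is an accurate dominating set of `G`: a dominating set such that no subset of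
`V \ D` of cardinality `|D|` is a dominating set of `G`. -/
def IsAccDomSet {V : Type*} (G : SimpleGraph V) (D : Finset V) : Prop :=
  IsDomSet G D ∧
    ∀ E : Finset V, (∀ v ∈ E, v ∉ D) → E.card = D.card → ¬ IsDomSet G E

/-- The domination number of `G`: the minimum cardinality of a dominating set. -/
noncomputable def domNum {V : Type*} (G : SimpleGraph V) : ℕ :=
  sInf {k | ∃ D : Finset V, IsDomSet G D ∧ D.card = k}

/-- The accurate domination number of `G`: the minimum cardinality of an accurate
dominating set. -/
noncomputable def accDomNum {V : Type*} (G : SimpleGraph V) : ℕ :=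
  sInf {k | ∃ D : Finset V, IsAccDomSet G D ∧ D.card = k}

/-- `d(G,i)`: the number of dominating sets of `G` of cardinality `i`. -/
noncomputable def numDomSets {V : Type*} (G : SimpleGraph V) (i : ℕ) : ℕ :=
  Set.ncard {D : Finset V | IsDomSet G D ∧ D.card = i}

/-- `d_a(G,i)`: the number of accurate dominating sets of `G` of cardinality `i`. -/
noncomputable def numAccDomSets {V : Type*} (G : SimpleGraph V) (i : ℕ) : ℕ :=
  Set.ncard {D : Finset V | IsAccDomSet G D ∧ D.card = i}

open Finset
open scoped Fin.NatCast Fin.CommRing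

lemma cyc_adj {n : ℕ} [NeZero n] (hn : 2 ≤ n) (u v : Fin n) :
    (SimpleGraph.cycleGraph n).Adj u v ↔ u = v + 1 ∨ v = u + 1 := by
  rw [SimpleGraph.cycleGraph_adj']
  have h1 : ((1 : Fin n) : ℕ) = 1 := by rw [Fin.val_one' n]; exact Nat.mod_eq_of_lt (by omega)
  constructor
  · rintro (h | h)
    · left
      have : u - v = 1 := Fin.ext (by rw [h, h1])
      rw [sub_eq_iff_eq_add] at this; rw [this]; ring
    · right
      have : v - u = 1 := Fin.ext (by rw [h, h1])
      rw [sub_eq_iff_eq_add] at this; rw [this]; ring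
  · rintro (h | h)
    · left; rw [h, show v + 1 - v = 1 by ring, h1]
    · right; rw [h, show u + 1 - u = 1 by ring, h1]

lemma dom_iff {n : ℕ} [NeZero n] (hn : 2 ≤ n) (D : Finset (Fin n)) :
    IsDomSet (SimpleGraph.cycleGraph n) D ↔ ∀ v : Fin n, v ∉ D → v - 1 ∈ D ∨ v + 1 ∈ D := by
  unfold IsDomSet
  constructor
  · intro h v hv
    obtain ⟨u, hu, hadj⟩ := h v hv
    rw [cyc_adj hn] at hadj
    rcases hadj with h' | h'
    · right; rw [← h']; exact hu
    · left
      have : u = v - 1 := by rw [h']; ring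
      rw [← this]; exact hu
  · intro h v hv
    rcases h v hv with h' | h'
    · exact ⟨v - 1, h', by rw [cyc_adj hn]; right; ring⟩
    · exact ⟨v + 1, h', by rw [cyc_adj hn]; left; rfl⟩

lemma lemmaA {n i : ℕ} [NeZero n] (hn : 6 ≤ n) (D : Finset (Fin n))
    (hD : IsDomSet (SimpleGraph.cycleGraph n) D) (hcard : D.card = i)
    (h2i : 2 * i ≤ n)
    (h3 : ∀ v : Fin n, ¬ (v ∈ D ∧ v + 1 ∈ D ∧ v + 2 ∈ D)) :
    ∃ E : Finset (Fin n), (∀ v ∈ E, v ∉ D) ∧ E.card = i ∧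
      IsDomSet (SimpleGraph.cycleGraph n) E := by
  classical
  set C1 := univ.filter (fun c : Fin n => c ∉ D ∧ c + 1 ∉ D) with hC1
  set C2 := univ.filter (fun c : Fin n => c ∉ D ∧ c + 1 ∈ D ∧ c + 2 ∉ D) with hC2
  set C3 := univ.filter (fun c : Fin n => c ∉ D ∧ c + 1 ∈ D ∧ c + 2 ∈ D) with hC3
  set T := univ.filter (fun c : Fin n => c - 1 ∉ D ∧ c ∉ D ∧ c + 1 ∈ D ∧ c + 2 ∉ D) with hT
  have inj1 : Function.Injective (fun c : Fin n => c + 1) := add_left_injective 1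
  have inj2 : Function.Injective (fun c : Fin n => c + 2) := add_left_injective 2
  -- (1) the complement splits
  have hsplit : Dᶜ = C1 ∪ C2 ∪ C3 := by
    ext c
    simp only [mem_compl, hC1, hC2, hC3, mem_union, mem_filter, mem_univ, true_and]
    tauto
  have hd12 : Disjoint C1 C2 := by
    rw [disjoint_left]; intro a h1 h2
    simp only [hC1, hC2, mem_filter] at h1 h2; tauto
  have hd13 : Disjoint C1 C3 := by
    rw [disjoint_left]; intro a h1 h2
    simp only [hC1, hC3, mem_filter] at h1 h2; tauto
  have hd23 : Disjoint C2 C3 := by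
    rw [disjoint_left]; intro a h1 h2
    simp only [hC2, hC3, mem_filter] at h1 h2; tauto
  have hcard1 : n - i = C1.card + C2.card + C3.card := by
    have : Dᶜ.card = n - i := by
      rw [card_compl, hcard]; simp
    rw [← this, hsplit, card_union_of_disjoint (by
        rw [disjoint_union_left]; exact ⟨hd13, hd23⟩),
      card_union_of_disjoint hd12]
  -- (2) D splits
  have hDsplit : D = C2.image (fun c => c + 1) ∪ C3.image (fun c => c + 1)
      ∪ C3.image (fun c => c + 2) := by
    ext d
    constructor
    · intro hd
      by_cases hdm : d - 1 ∈ D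
      · have hd2 : d - 2 ∉ D := by
          intro hc
          exact h3 (d - 2) ⟨hc, by rwa [show d - 2 + 1 = d - 1 by ring],
            by rwa [show d - 2 + 2 = d by ring]⟩
        refine mem_union_right _ (mem_image.2 ⟨d - 2, ?_, by ring⟩)
        simp only [hC3, mem_filter, mem_univ, true_and]
        exact ⟨hd2, by rwa [show d - 2 + 1 = d - 1 by ring],
          by rwa [show d - 2 + 2 = d by ring]⟩
      · by_cases hdp : d + 1 ∈ D
        · refine mem_union_left _ (mem_union_right _ (mem_image.2 ⟨d - 1, ?_, by ring⟩))
          simp only [hC3, mem_filter, mem_univ, true_and]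
          exact ⟨hdm, by rwa [show d - 1 + 1 = d by ring],
            by rwa [show d - 1 + 2 = d + 1 by ring]⟩
        · refine mem_union_left _ (mem_union_left _ (mem_image.2 ⟨d - 1, ?_, by ring⟩))
          simp only [hC2, mem_filter, mem_univ, true_and]
          exact ⟨hdm, by rwa [show d - 1 + 1 = d by ring],
            by rwa [show d - 1 + 2 = d + 1 by ring]⟩
    · intro hd
      rcases mem_union.1 hd with hd' | hd'
      · rcases mem_union.1 hd' with hd'' | hd''
        · obtain ⟨c, hc, rfl⟩ := mem_image.1 hd''
          simp only [hC2, mem_filter] at hc; tauto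
        · obtain ⟨c, hc, rfl⟩ := mem_image.1 hd''
          simp only [hC3, mem_filter] at hc; tauto
      · obtain ⟨c, hc, rfl⟩ := mem_image.1 hd'
        simp only [hC3, mem_filter] at hc; tauto
  have hcard2 : i = C2.card + C3.card + C3.card := by
    have hdj1 : Disjoint (C2.image (fun c => c + 1)) (C3.image (fun c => c + 1)) :=
      (disjoint_image inj1).2 hd23
    have hdj2 : Disjoint (C2.image (fun c => c + 1) ∪ C3.image (fun c => c + 1))
        (C3.image (fun c => c + 2)) := by
      rw [disjoint_left]
      intro a ha ha'
      obtain ⟨c', hc', hc'e⟩ := mem_image.1 ha'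
      simp only [hC3, mem_filter] at hc'
      have hcD : c' + 1 ∈ D := hc'.2.2.1
      rcases mem_union.1 ha with h' | h' <;>
      · obtain ⟨c, hc, hce⟩ := mem_image.1 h'
        simp only [hC2, hC3, mem_filter] at hc
        have : c = c' + 1 := by
          have : c + 1 = c' + 1 + 1 := by rw [hce, ← hc'e]; ring
          exact inj1 this
        rw [this] at hc
        exact hc.2.1 hcD
    rw [← hcard, hDsplit, card_union_of_disjoint hdj2, card_union_of_disjoint hdj1,
      card_image_of_injective _ inj1, card_image_of_injective _ inj1,
      card_image_of_injective _ inj2]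
  -- (3) C1 + 1 ⊆ T ∪ C3
  have hC1T : C1.image (fun c => c + 1) ⊆ T ∪ C3 := by
    intro x hx
    obtain ⟨c, hc, rfl⟩ := mem_image.1 hx
    simp only [hC1, mem_filter, mem_univ, true_and] at hc
    obtain ⟨hc0, hc1⟩ := hc
    by_cases hx1 : c + 1 + 1 ∈ D
    · by_cases hx2 : c + 1 + 2 ∈ D
      · refine mem_union_right _ ?_
        simp only [hC3, mem_filter, mem_univ, true_and]
        exact ⟨hc1, hx1, hx2⟩
      · refine mem_union_left _ ?_
        simp only [hT, mem_filter, mem_univ, true_and]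
        exact ⟨by rwa [show c + 1 - 1 = c by ring], hc1, hx1, hx2⟩
    · exfalso
      rcases (dom_iff (by omega) D).1 hD (c + 1) hc1 with h' | h'
      · rw [show c + 1 - 1 = c by ring] at h'; exact hc0 h'
      · exact hx1 h'
  have hcard3 : C1.card ≤ T.card + C3.card := by
    calc C1.card = (C1.image (fun c => c + 1)).card :=
          (card_image_of_injective _ inj1).symm
      _ ≤ (T ∪ C3).card := card_le_card hC1T
      _ ≤ T.card + C3.card := card_union_le _ _
  -- (4) choose R
  have hTcard : n - 2 * i ≤ T.card := by omega
  obtain ⟨R, hRT, hRcard⟩ := Finset.exists_subset_card_eq hTcard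
  have hRmem : ∀ x ∈ R, x - 1 ∉ D ∧ x ∉ D ∧ x + 1 ∈ D ∧ x + 2 ∉ D := by
    intro x hx
    have := hRT hx
    simpa only [hT, mem_filter, mem_univ, true_and] using this
  have hRD : R ⊆ Dᶜ := fun x hx => mem_compl.2 (hRmem x hx).2.1
  refine ⟨Dᶜ \ R, ?_, ?_, ?_⟩
  · intro v hv
    exact mem_compl.1 (mem_sdiff.1 hv).1
  · rw [card_sdiff_of_subset hRD, card_compl, hcard, hRcard]
    simp only [Fintype.card_fin]
    omega
  · rw [dom_iff (by omega)]
    intro v hv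
    have hmemE : ∀ x : Fin n, x ∉ D → x ∉ R → x ∈ Dᶜ \ R := fun x h1 h2 =>
      mem_sdiff.2 ⟨mem_compl.2 h1, h2⟩
    have hv' : v ∈ D ∨ v ∈ R := by
      by_contra hc
      push_neg at hc
      exact hv (hmemE v hc.1 hc.2)
    rcases hv' with hvD | hvR
    · have hnot : ¬ (v - 1 ∈ D ∧ v ∈ D ∧ v + 1 ∈ D) := by
        intro hc
        exact h3 (v - 1) ⟨hc.1, by rw [show v - 1 + 1 = v by ring]; exact hc.2.1,
          by rw [show v - 1 + 2 = v + 1 by ring]; exact hc.2.2⟩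
      by_cases hvp : v + 1 ∈ D
      · have hvm : v - 1 ∉ D := fun hc => hnot ⟨hc, hvD, hvp⟩
        have hvmR : v - 1 ∉ R := by
          intro hc
          have := (hRmem _ hc).2.2.2
          rw [show v - 1 + 2 = v + 1 by ring] at this
          exact this hvp
        exact Or.inl (hmemE _ hvm hvmR)
      · have hvpR : v + 1 ∉ R := by
          intro hc
          have := (hRmem _ hc).1
          rw [show v + 1 - 1 = v by ring] at this
          exact this hvD
        exact Or.inr (hmemE _ hvp hvpR)
    · obtain ⟨h1, h2, h3', h4⟩ := hRmem _ hvR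
      have hvmR : v - 1 ∉ R := by
        intro hc
        have := (hRmem _ hc).2.2.1
        rw [show v - 1 + 1 = v by ring] at this
        exact h2 this
      exact Or.inl (hmemE _ h1 hvmR)

lemma cast_inj_lt {n a b : ℕ} [NeZero n] (ha : a < n) (hb : b < n)
    (h : (a : Fin n) = (b : Fin n)) : a = b := by
  have := congrArg Fin.val h
  rwa [Fin.val_cast_of_lt ha, Fin.val_cast_of_lt hb] at this

lemma run_extract {n i : ℕ} [NeZero n] (hn : 6 ≤ n) (D : Finset (Fin n))
    (hD : IsDomSet (SimpleGraph.cycleGraph n) D) (hcard : D.card = i)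
    (h2i : 2 * i ≤ n) (hi4 : 4 ≤ i)
    (hrun : ∃ v : Fin n, v ∈ D ∧ v + 1 ∈ D ∧ v + 2 ∈ D) :
    ∃ (s : Fin n) (k : ℕ), 3 ≤ k ∧ k ≤ i - 1 ∧
      (∀ j : ℕ, j < k → s + (j : Fin n) ∈ D) ∧ s + (k : Fin n) ∉ D ∧ s - 1 ∉ D := by
  classical
  obtain ⟨v, hv0, hv1, hv2⟩ := hrun
  have hin : i < n := by omega
  have hDne : ∃ w : Fin n, w ∉ D := by
    by_contra hc
    push_neg at hc
    have : D = univ := eq_univ_of_forall hc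
    rw [this, card_univ, Fintype.card_fin] at hcard
    omega
  obtain ⟨w, hw⟩ := hDne
  have hwv : w ≠ v := fun h => hw (h ▸ hv0)
  -- the forward run length b
  have hPb : ∃ j : ℕ, 1 ≤ j ∧ v + (j : Fin n) ∉ D := by
    refine ⟨(w - v).val, ?_, ?_⟩
    · have : w - v ≠ 0 := sub_ne_zero.2 hwv
      have : (w - v).val ≠ 0 := fun h => this (Fin.ext h)
      omega
    · rwa [Fin.cast_val_eq_self, add_sub_cancel]
  set b := Nat.find hPb with hbdef
  have hbspec : 1 ≤ b ∧ v + (b : Fin n) ∉ D := Nat.find_spec hPb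
  have hbmin : ∀ j, j < b → ¬(1 ≤ j ∧ v + (j : Fin n) ∉ D) := fun j hj => Nat.find_min hPb hj
  have hbn : b < n := by
    have : (w - v).val < n := (w - v).isLt
    have hle : b ≤ (w - v).val := Nat.find_min' hPb (by
      constructor
      · have : w - v ≠ 0 := sub_ne_zero.2 hwv
        have : (w - v).val ≠ 0 := fun h => this (Fin.ext h)
        omega
      · rwa [Fin.cast_val_eq_self, add_sub_cancel])
    omega
  have hb3 : 3 ≤ b := by
    rcases Nat.lt_or_ge b 3 with h | h
    · interval_cases b
      · omega
      · exfalso; exact hbspec.2 (by rwa [Nat.cast_one])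
      · exfalso; exact hbspec.2 (by rwa [Nat.cast_ofNat])
    · exact h
  -- the backward run length a
  have hPa : ∃ j : ℕ, 1 ≤ j ∧ v - (j : Fin n) ∉ D := by
    refine ⟨(v - w).val, ?_, ?_⟩
    · have : v - w ≠ 0 := sub_ne_zero.2 (Ne.symm hwv)
      have : (v - w).val ≠ 0 := fun h => this (Fin.ext h)
      omega
    · rwa [Fin.cast_val_eq_self, sub_sub_cancel]
  set a := Nat.find hPa with hadef
  have haspec : 1 ≤ a ∧ v - (a : Fin n) ∉ D := Nat.find_spec hPa
  have hamin : ∀ j, j < a → ¬(1 ≤ j ∧ v - (j : Fin n) ∉ D) := fun j hj => Nat.find_min hPa hj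
  have han : a < n := by
    have : (v - w).val < n := (v - w).isLt
    have hle : a ≤ (v - w).val := Nat.find_min' hPa (by
      constructor
      · have : v - w ≠ 0 := sub_ne_zero.2 (Ne.symm hwv)
        have : (v - w).val ≠ 0 := fun h => this (Fin.ext h)
        omega
      · rwa [Fin.cast_val_eq_self, sub_sub_cancel])
    omega
  have hab : a + b ≤ n := by
    by_contra hc
    push_neg at hc
    have h1 : 1 ≤ n - a := by omega
    have h2 : n - a < b := by omega
    refine hbmin _ h2 ⟨h1, ?_⟩
    have : ((n - a : ℕ) : Fin n) = -(a : Fin n) := by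
      have : ((n - a : ℕ) : Fin n) + (a : Fin n) = 0 := by
        rw [← Nat.cast_add]
        have : n - a + a = n := by omega
        rw [this, Fin.natCast_self]
      linear_combination this
    rw [this]
    rw [← sub_eq_add_neg]
    exact haspec.2
  set k := a + b - 1 with hkdef
  set s := v - ((a - 1 : ℕ) : Fin n) with hsdef
  have hrunmem : ∀ j : ℕ, j < k → s + (j : Fin n) ∈ D := by
    intro j hj
    rcases Nat.lt_or_ge j a with hja | hja
    · -- j ≤ a - 1
      have hc' : ((a - 1 : ℕ) : Fin n) = ((a - 1 - j : ℕ) : Fin n) + (j : Fin n) := by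
        rw [← Nat.cast_add]; congr 1; omega
      have : s + (j : Fin n) = v - ((a - 1 - j : ℕ) : Fin n) := by
        rw [hsdef, hc']; ring
      rw [this]
      rcases Nat.eq_zero_or_pos (a - 1 - j) with h0 | h0
      · rw [h0, Nat.cast_zero, sub_zero]; exact hv0
      · have := hamin (a - 1 - j) (by omega)
        push_neg at this
        exact this (by omega)
    · -- j ≥ a
      have hc' : ((j : ℕ) : Fin n) = ((a - 1 : ℕ) : Fin n) + ((j - (a - 1) : ℕ) : Fin n) := by
        rw [← Nat.cast_add]; congr 1; omega
      have : s + (j : Fin n) = v + ((j - (a - 1) : ℕ) : Fin n) := by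
        rw [hsdef, hc']; ring
      rw [this]
      have hlt : j - (a - 1) < b := by omega
      have := hbmin _ hlt
      push_neg at this
      exact this (by omega)
  have hend : s + (k : Fin n) ∉ D := by
    have hc' : ((k : ℕ) : Fin n) = ((a - 1 : ℕ) : Fin n) + ((b : ℕ) : Fin n) := by
      rw [← Nat.cast_add]; congr 1; omega
    have : s + (k : Fin n) = v + (b : Fin n) := by
      rw [hsdef, hc']; ring
    rw [this]
    exact hbspec.2
  have hstart : s - 1 ∉ D := by
    have hc' : ((a : ℕ) : Fin n) = ((a - 1 : ℕ) : Fin n) + 1 := by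
      rw [show (1 : Fin n) = ((1 : ℕ) : Fin n) by rw [Nat.cast_one], ← Nat.cast_add]
      congr 1; omega
    have : s - 1 = v - (a : Fin n) := by
      rw [hsdef, hc']; ring
    rw [this]
    exact haspec.2
  have hkn : k < n := by omega
  -- the run as a finset
  have hki : k ≤ i := by
    have hsub : (range k).image (fun (j : ℕ) => s + (j : Fin n)) ⊆ D := by
      intro x hx
      obtain ⟨j, hj, rfl⟩ := mem_image.1 hx
      exact hrunmem j (mem_range.1 hj)
    have hcr : ((range k).image (fun (j : ℕ) => s + (j : Fin n))).card = k := by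
      rw [card_image_of_injOn, card_range]
      intro j1 h1 j2 h2 h
      simp only [mem_coe, mem_range] at h1 h2
      exact cast_inj_lt (by omega) (by omega) (add_left_cancel h)
    calc k = ((range k).image (fun (j : ℕ) => s + (j : Fin n))).card := hcr.symm
      _ ≤ D.card := card_le_card hsub
      _ = i := hcard
  have hkne : k ≠ i := by
    intro hk
    have hsub : (range k).image (fun (j : ℕ) => s + (j : Fin n)) ⊆ D := by
      intro x hx
      obtain ⟨j, hj, rfl⟩ := mem_image.1 hx
      exact hrunmem j (mem_range.1 hj)
    have hcr : ((range k).image (fun (j : ℕ) => s + (j : Fin n))).card = k := by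
      rw [card_image_of_injOn, card_range]
      intro j1 h1 j2 h2 h
      simp only [mem_coe, mem_range] at h1 h2
      exact cast_inj_lt (by omega) (by omega) (add_left_cancel h)
    have hDeq : D = (range k).image (fun (j : ℕ) => s + (j : Fin n)) :=
      (eq_of_subset_of_card_le hsub (by omega)).symm
    have hnotmem : ∀ m : ℕ, k < m → m < n → s + (m : Fin n) ∉ D := by
      intro m hm1 hm2 hc
      rw [hDeq] at hc
      obtain ⟨j, hj, hje⟩ := mem_image.1 hc
      have : (j : Fin n) = (m : Fin n) := add_left_cancel hje
      have := cast_inj_lt (by have := mem_range.1 hj; omega) hm2 this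
      have := mem_range.1 hj
      omega
    have hv0' : s + ((k + 1 : ℕ) : Fin n) ∉ D := hnotmem (k + 1) (by omega) (by omega)
    have hv1' : s + ((k + 1 : ℕ) : Fin n) - 1 ∉ D := by
      have : s + ((k + 1 : ℕ) : Fin n) - 1 = s + (k : Fin n) := by
        rw [Nat.cast_add, Nat.cast_one]; ring
      rw [this]; exact hend
    have hv2' : s + ((k + 1 : ℕ) : Fin n) + 1 ∉ D := by
      have : s + ((k + 1 : ℕ) : Fin n) + 1 = s + ((k + 2 : ℕ) : Fin n) := by
        rw [Nat.cast_add, Nat.cast_add, Nat.cast_one, Nat.cast_ofNat]; ring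
      rw [this]
      exact hnotmem (k + 2) (by omega) (by omega)
    rcases (dom_iff (by omega) D).1 hD _ hv0' with h' | h'
    · exact hv1' h'
    · exact hv2' h'
  exact ⟨s, k, by omega, by omega, hrunmem, hend, hstart⟩

noncomputable def reconstruct (n k : ℕ) [NeZero n] (s : Fin n)
    (S : Finset (Fin (n - k - 2))) : Finset (Fin n) :=
  ((range k).image (fun (j : ℕ) => s + (j : Fin n))) ∪
    (S.image (fun j => s + ((k + 1 + j.val : ℕ) : Fin n)))

lemma path_extract {n i k : ℕ} [NeZero n] (hn : 6 ≤ n) (D : Finset (Fin n)) (s : Fin n)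
    (hD : IsDomSet (SimpleGraph.cycleGraph n) D) (hcard : D.card = i)
    (h2i : 2 * i ≤ n) (hi4 : 4 ≤ i) (hk3 : 3 ≤ k) (hki : k ≤ i - 1)
    (hrun : ∀ j : ℕ, j < k → s + (j : Fin n) ∈ D)
    (hend : s + (k : Fin n) ∉ D) (hstart : s - 1 ∉ D) :
    ∃ S : Finset (Fin (n - k - 2)), IsDomSet (SimpleGraph.pathGraph (n - k - 2)) S ∧
      S.card = i - k ∧ reconstruct n k s S = D := by
  classical
  set m := n - k - 2 with hm
  have hm3 : 3 ≤ m := by omega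
  have hkm : k + 1 + m = n - 1 := by omega
  set S := univ.filter (fun j : Fin m => s + ((k + 1 + (j : ℕ) : ℕ) : Fin n) ∈ D) with hS
  have hSmem : ∀ j : Fin m, j ∈ S ↔ s + ((k + 1 + (j : ℕ) : ℕ) : Fin n) ∈ D := by
    intro j
    simp [hS]
  have hneg1 : ((n - 1 : ℕ) : Fin n) = -1 := by
    have : ((n - 1 : ℕ) : Fin n) + 1 = 0 := by
      rw [show (1 : Fin n) = ((1 : ℕ) : Fin n) by rw [Nat.cast_one], ← Nat.cast_add,
        show n - 1 + 1 = n by omega, Fin.natCast_self]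
    linear_combination this
  have hcs : ∀ t : ℕ, ((t + 1 : ℕ) : Fin n) = (t : Fin n) + 1 := fun t => by
    rw [Nat.cast_add, Nat.cast_one]
  -- reconstruction
  have hrec : reconstruct n k s S = D := by
    ext x
    constructor
    · intro hx
      rcases mem_union.1 hx with hx' | hx'
      · obtain ⟨j, hj, rfl⟩ := mem_image.1 hx'
        exact hrun j (mem_range.1 hj)
      · obtain ⟨j, hj, rfl⟩ := mem_image.1 hx'
        exact (hSmem j).1 hj
    · intro hx
      set t := (x - s).val with ht
      have hxe : x = s + (t : Fin n) := by
        rw [ht, Fin.cast_val_eq_self]; ring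
      have htn : t < n := (x - s).isLt
      rcases Nat.lt_or_ge t k with h' | h'
      · exact mem_union_left _ (mem_image.2 ⟨t, mem_range.2 h', hxe.symm⟩)
      · have htk : t ≠ k := by
          intro h
          rw [hxe, h] at hx
          exact hend hx
        have htn1 : t ≠ n - 1 := by
          intro h
          rw [hxe, h, hneg1] at hx
          exact hstart (by rwa [← sub_eq_add_neg] at hx)
        have htb : k + 1 ≤ t ∧ t ≤ n - 2 := by omega
        refine mem_union_right _ (mem_image.2 ⟨⟨t - (k + 1), by omega⟩, ?_, ?_⟩)
        · rw [hSmem]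
          simp only
          rw [show k + 1 + (t - (k + 1)) = t by omega]
          rwa [← hxe]
        · simp only
          rw [show k + 1 + (t - (k + 1)) = t by omega, ← hxe]
  -- cardinality
  have hcardrec : S.card = i - k := by
    have hdisj : Disjoint ((range k).image (fun (j : ℕ) => s + (j : Fin n)))
        (S.image (fun j => s + ((k + 1 + j.val : ℕ) : Fin n))) := by
      rw [disjoint_left]
      intro x hx1 hx2
      obtain ⟨j1, hj1, he1⟩ := mem_image.1 hx1
      obtain ⟨j2, hj2, he2⟩ := mem_image.1 hx2
      have : (j1 : Fin n) = ((k + 1 + (j2 : ℕ) : ℕ) : Fin n) :=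
        add_left_cancel (he1.trans he2.symm)
      have hj1k := mem_range.1 hj1
      have hj2m : (j2 : ℕ) < m := j2.isLt
      have := cast_inj_lt (by omega) (by omega) this
      omega
    have hc1 : ((range k).image (fun (j : ℕ) => s + (j : Fin n))).card = k := by
      rw [card_image_of_injOn, card_range]
      intro j1 h1 j2 h2 h
      simp only [mem_coe, mem_range] at h1 h2
      exact cast_inj_lt (by omega) (by omega) (add_left_cancel h)
    have hc2 : (S.image (fun j => s + ((k + 1 + j.val : ℕ) : Fin n))).card = S.card := by
      rw [card_image_of_injOn]
      intro j1 h1 j2 h2 h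
      have := cast_inj_lt (show k + 1 + (j1 : ℕ) < n by have := j1.isLt; omega)
        (show k + 1 + (j2 : ℕ) < n by have := j2.isLt; omega) (add_left_cancel h)
      exact Fin.ext (by omega)
    have : i = k + S.card := by
      rw [← hcard, ← hrec, reconstruct, card_union_of_disjoint hdisj, hc1, hc2]
    omega
  -- S dominates the path graph
  refine ⟨S, ?_, hcardrec, hrec⟩
  intro j hj
  have hxD : s + ((k + 1 + (j : ℕ) : ℕ) : Fin n) ∉ D := fun h => hj ((hSmem j).2 h)
  have hjm : (j : ℕ) < m := j.isLt
  rcases (dom_iff (by omega) D).1 hD _ hxD with h' | h'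
  · -- left neighbour in D
    have hj0 : (j : ℕ) ≠ 0 := by
      intro h0
      have : s + ((k + 1 + (j : ℕ) : ℕ) : Fin n) - 1 = s + ((k : ℕ) : Fin n) := by
        rw [h0, show k + 1 + 0 = k + 1 from rfl, hcs k]
        ring
      rw [this] at h'
      exact hend h'
    refine ⟨⟨(j : ℕ) - 1, by omega⟩, ?_, ?_⟩
    · rw [hSmem]
      simp only
      have : s + ((k + 1 + (j : ℕ) : ℕ) : Fin n) - 1
          = s + ((k + 1 + ((j : ℕ) - 1) : ℕ) : Fin n) := by
        rw [show k + 1 + (j : ℕ) = (k + 1 + ((j : ℕ) - 1)) + 1 by omega, hcs]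
        ring
      rwa [this] at h'
    · rw [SimpleGraph.pathGraph_adj]
      left
      simp only
      omega
  · -- right neighbour in D
    have hjm1 : (j : ℕ) ≠ m - 1 := by
      intro h0
      have : s + ((k + 1 + (j : ℕ) : ℕ) : Fin n) + 1 = s - 1 := by
        rw [h0, show k + 1 + (m - 1) = n - 2 by omega,
          show ((n - 2 : ℕ) : Fin n) = ((n - 1 : ℕ) : Fin n) - 1 by
            rw [show (n - 1 : ℕ) = (n - 2) + 1 by omega, hcs]; ring,
          hneg1]
        ring
      rw [this] at h'
      exact hstart h'
    refine ⟨⟨(j : ℕ) + 1, by omega⟩, ?_, ?_⟩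
    · rw [hSmem]
      simp only
      have : s + ((k + 1 + (j : ℕ) : ℕ) : Fin n) + 1
          = s + ((k + 1 + ((j : ℕ) + 1) : ℕ) : Fin n) := by
        rw [show k + 1 + ((j : ℕ) + 1) = (k + 1 + (j : ℕ)) + 1 by omega, hcs]
        ring
      rwa [← this]
    · rw [SimpleGraph.pathGraph_adj]
      right
      rfl

/-- Upper bound for the number of accurate dominating sets of the cycle `C_n` of
cardinality `i`, for `⌊n/3⌋ + 2 ≤ i ≤ ⌊n/2⌋`. -/
theorem cycle_numAccDomSets_upper (n i : ℕ) (hn : 6 ≤ n)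
    (h1 : n / 3 + 2 ≤ i) (h2 : i ≤ n / 2) :
    numAccDomSets (SimpleGraph.cycleGraph n) i ≤
      ∑ k ∈ Finset.Icc 3 (i - 1),
        n * numDomSets (SimpleGraph.pathGraph (n - k - 2)) (i - k) := by
  classical
  have hNZ : NeZero n := ⟨by omega⟩
  have hi4 : 4 ≤ i := by omega
  have h2i : 2 * i ≤ n := by omega
  have hL : numAccDomSets (SimpleGraph.cycleGraph n) i
      = (Finset.univ.filter (fun D : Finset (Fin n) =>
          IsAccDomSet (SimpleGraph.cycleGraph n) D ∧ D.card = i)).card := by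
    unfold numAccDomSets
    rw [← Set.ncard_coe_finset]
    congr 1
    ext D
    simp
  have hR : ∀ k : ℕ, numDomSets (SimpleGraph.pathGraph (n - k - 2)) (i - k)
      = (Finset.univ.filter (fun S : Finset (Fin (n - k - 2)) =>
          IsDomSet (SimpleGraph.pathGraph (n - k - 2)) S ∧ S.card = i - k)).card := by
    intro k
    unfold numDomSets
    rw [← Set.ncard_coe_finset]
    congr 1
    ext S
    simp
  rw [hL]
  set B := (Finset.Icc 3 (i - 1)).biUnion (fun k =>
    (Finset.univ : Finset (Fin n)).biUnion (fun s =>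
      (Finset.univ.filter (fun S : Finset (Fin (n - k - 2)) =>
        IsDomSet (SimpleGraph.pathGraph (n - k - 2)) S ∧ S.card = i - k)).image
        (reconstruct n k s))) with hB
  have hsub : (Finset.univ.filter (fun D : Finset (Fin n) =>
      IsAccDomSet (SimpleGraph.cycleGraph n) D ∧ D.card = i)) ⊆ B := by
    intro D hD
    rw [Finset.mem_filter] at hD
    obtain ⟨-, ⟨hDdom, hDacc⟩, hDcard⟩ := hD
    have hrun : ∃ v : Fin n, v ∈ D ∧ v + 1 ∈ D ∧ v + 2 ∈ D := by
      by_contra hc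
      have h3 : ∀ v : Fin n, ¬ (v ∈ D ∧ v + 1 ∈ D ∧ v + 2 ∈ D) := fun v hv => hc ⟨v, hv⟩
      obtain ⟨E, hE1, hE2, hE3⟩ := lemmaA hn D hDdom hDcard h2i h3
      exact hDacc E hE1 (by rw [hE2, hDcard]) hE3
    obtain ⟨s, k, hk3, hki1, hrunm, hend, hstart⟩ :=
      run_extract hn D hDdom hDcard h2i hi4 hrun
    obtain ⟨S, hSdom, hScard, hrec⟩ :=
      path_extract hn D s hDdom hDcard h2i hi4 hk3 hki1 hrunm hend hstart
    rw [hB]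
    rw [Finset.mem_biUnion]
    refine ⟨k, Finset.mem_Icc.2 ⟨hk3, hki1⟩, ?_⟩
    rw [Finset.mem_biUnion]
    refine ⟨s, Finset.mem_univ s, ?_⟩
    rw [Finset.mem_image]
    exact ⟨S, Finset.mem_filter.2 ⟨Finset.mem_univ S, hSdom, hScard⟩, hrec⟩
  calc (Finset.univ.filter (fun D : Finset (Fin n) =>
      IsAccDomSet (SimpleGraph.cycleGraph n) D ∧ D.card = i)).card
      ≤ B.card := Finset.card_le_card hsub
    _ ≤ ∑ k ∈ Finset.Icc 3 (i - 1),
        ((Finset.univ : Finset (Fin n)).biUnion (fun s =>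
          (Finset.univ.filter (fun S : Finset (Fin (n - k - 2)) =>
            IsDomSet (SimpleGraph.pathGraph (n - k - 2)) S ∧ S.card = i - k)).image
            (reconstruct n k s))).card := Finset.card_biUnion_le
    _ ≤ ∑ k ∈ Finset.Icc 3 (i - 1), ∑ s : Fin n,
          ((Finset.univ.filter (fun S : Finset (Fin (n - k - 2)) =>
            IsDomSet (SimpleGraph.pathGraph (n - k - 2)) S ∧ S.card = i - k)).image
            (reconstruct n k s)).card :=
        Finset.sum_le_sum (fun k _ => Finset.card_biUnion_le)
    _ ≤ ∑ k ∈ Finset.Icc 3 (i - 1), ∑ _s : Fin n,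
          (Finset.univ.filter (fun S : Finset (Fin (n - k - 2)) =>
            IsDomSet (SimpleGraph.pathGraph (n - k - 2)) S ∧ S.card = i - k)).card :=
        Finset.sum_le_sum (fun k _ => Finset.sum_le_sum (fun s _ => Finset.card_image_le))
    _ = ∑ k ∈ Finset.Icc 3 (i - 1),
          n * numDomSets (SimpleGraph.pathGraph (n - k - 2)) (i - k) := by
        refine Finset.sum_congr rfl fun k _ => ?_
        rw [hR k, Finset.sum_const, Finset.card_univ, Fintype.card_fin, smul_eq_mul]
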